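/- Let α > 2, β > 0, d > 0, P_t > 0, σ² ≥ 0, λ_l > 0 and λ_v > 0. The function p ↦ π λ_l λ_v p · log₂(1+β) · exp(−βσ²d^α/P_t − 2pλ_v β^{1/α} d (π/α) csc(π/α)) on (0, ∞), which is the area spectral efficiency of the 1D Poisson bipolar network model, attains its maximum at the unique point p* = α / (2 λ_v d β^{1/α} π csc(π/α)); that is, it is strictly increasing on (0, p*) and strictly decreasing on (p*, ∞). -/

import Mathlib

open MeasureTheory Real


lemma aux_deriv (c p : ℝ) :
    HasDerivAt (fun p : ℝ => p * Real.exp (-(c * p)))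
      ((1 - c * p) * Real.exp (-(c * p))) p := by
  have h1 : HasDerivAt (fun p : ℝ => -(c * p)) (-c) p := by
    simpa using ((hasDerivAt_id p).const_mul c).fun_neg
  have h2 := h1.exp
  have := (hasDerivAt_id p).fun_mul h2
  refine this.congr_deriv ?_
  simp [id]; ring

lemma aux_mono (c : ℝ) (hc : 0 < c) :
    StrictMonoOn (fun p : ℝ => p * Real.exp (-(c * p))) (Set.Icc 0 (1 / c)) := by
  apply strictMonoOn_of_deriv_pos (convex_Icc _ _)
  · exact Continuous.continuousOn (by continuity)
  · intro x hx
    rw [interior_Icc, Set.mem_Ioo] at hx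
    rw [(aux_deriv c x).deriv]
    have h1 : 0 < 1 - c * x := by
      have := (lt_div_iff₀ hc).mp hx.2
      linarith
    positivity

lemma aux_anti (c : ℝ) (hc : 0 < c) :
    StrictAntiOn (fun p : ℝ => p * Real.exp (-(c * p))) (Set.Ici (1 / c)) := by
  apply strictAntiOn_of_deriv_neg (convex_Ici _)
  · exact Continuous.continuousOn (by continuity)
  · intro x hx
    rw [interior_Ici, Set.mem_Ioi] at hx
    rw [(aux_deriv c x).deriv]
    have h1 : 1 - c * x < 0 := by
      have := (div_lt_iff₀ hc).mp hx
      linarith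
    have := Real.exp_pos (-(c * x))
    nlinarith

/-- The area spectral efficiency of the 1D Poisson bipolar network model as a
function of the transmission probability `p`:
`ASE(p) = πλ_lλ_v p · log₂(1+β) · exp(−βσ²d^α/P_t − 2pλ_v β^(1/α) d (π/α) csc(π/α))`. -/
noncomputable def ASE1D (α β d Pt σ2 laml lamv p : ℝ) : ℝ :=
  π * laml * lamv * p * Real.logb 2 (1 + β) *
    Real.exp (-(β * σ2 * d ^ α / Pt)
      - 2 * p * lamv * β ^ (1 / α) * d * (π / α) * (Real.sin (π / α))⁻¹)

/-- The ASE of the 1D Poisson bipolar network model attains its maximum on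
`(0, ∞)` at the unique point `p* = α / (2λ_v d β^(1/α) π csc(π/α))`; it is
strictly increasing on `(0, p*)` and strictly decreasing on `(p*, ∞)`. -/
theorem ASE1D_max (α β d Pt σ2 laml lamv : ℝ)
    (hα : 2 < α) (hβ : 0 < β) (hd : 0 < d) (hPt : 0 < Pt) (hσ2 : 0 ≤ σ2)
    (hlaml : 0 < laml) (hlamv : 0 < lamv) :
    (∀ q : ℝ, 0 < q →
      ASE1D α β d Pt σ2 laml lamv q
        ≤ ASE1D α β d Pt σ2 laml lamv
            (α / (2 * lamv * d * β ^ (1 / α) * π * (Real.sin (π / α))⁻¹))) ∧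
    (∀ q : ℝ, 0 < q →
      ASE1D α β d Pt σ2 laml lamv q
          = ASE1D α β d Pt σ2 laml lamv
              (α / (2 * lamv * d * β ^ (1 / α) * π * (Real.sin (π / α))⁻¹)) →
        q = α / (2 * lamv * d * β ^ (1 / α) * π * (Real.sin (π / α))⁻¹)) ∧
    StrictMonoOn (fun p : ℝ => ASE1D α β d Pt σ2 laml lamv p)
      (Set.Ioo 0 (α / (2 * lamv * d * β ^ (1 / α) * π * (Real.sin (π / α))⁻¹))) ∧
    StrictAntiOn (fun p : ℝ => ASE1D α β d Pt σ2 laml lamv p)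
      (Set.Ioi (α / (2 * lamv * d * β ^ (1 / α) * π * (Real.sin (π / α))⁻¹))) := by
  have hα0 : 0 < α := by linarith
  have hsin : 0 < Real.sin (π / α) := by
    apply Real.sin_pos_of_pos_of_lt_pi
    · positivity
    · rw [div_lt_iff₀ hα0]
      nlinarith [Real.pi_pos]
  set s : ℝ := (Real.sin (π / α))⁻¹ with hs
  have hspos : 0 < s := inv_pos.mpr hsin
  have hrpow : 0 < β ^ (1 / α) := Real.rpow_pos_of_pos hβ _
  set c : ℝ := 2 * lamv * β ^ (1 / α) * d * (π / α) * s with hcdef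
  have hc : 0 < c := by
    have := Real.pi_pos
    positivity
  set L : ℝ := Real.logb 2 (1 + β) with hL
  have hLpos : 0 < L := Real.logb_pos (by norm_num) (by linarith)
  set C : ℝ := π * laml * lamv * L * Real.exp (-(β * σ2 * d ^ α / Pt)) with hCdef
  have hC : 0 < C := by
    have := Real.pi_pos
    positivity
  set f : ℝ → ℝ := fun p => p * Real.exp (-(c * p)) with hf
  have hkey : ∀ p : ℝ, ASE1D α β d Pt σ2 laml lamv p = C * f p := by
    intro p
    show _ = C * (p * Real.exp (-(c * p)))
    rw [ASE1D, hCdef, show -(β * σ2 * d ^ α / Pt)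
        - 2 * p * lamv * β ^ (1 / α) * d * (π / α) * s
        = -(β * σ2 * d ^ α / Pt) + -(c * p) by rw [hcdef]; ring,
      Real.exp_add]
    ring
  have hps : α / (2 * lamv * d * β ^ (1 / α) * π * s) = 1 / c := by
    rw [hcdef, div_eq_div_iff (by positivity) (by positivity)]
    field_simp
  rw [hps]
  have hmono := aux_mono c hc
  have hanti := aux_anti c hc
  have hmem : (1 / c) ∈ Set.Icc (0 : ℝ) (1 / c) := ⟨by positivity, le_refl _⟩
  refine ⟨?_, ?_, ?_, ?_⟩
  · intro q hq
    rw [hkey, hkey]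
    apply mul_le_mul_of_nonneg_left _ hC.le
    rcases le_or_gt q (1 / c) with h | h
    · exact hmono.monotoneOn ⟨hq.le, h⟩ hmem h
    · exact (hanti Set.self_mem_Ici h.le h).le
  · intro q hq heq
    rw [hkey, hkey] at heq
    have hfe : f q = f (1 / c) := by
      exact mul_left_cancel₀ hC.ne' heq
    by_contra hne
    rcases lt_or_gt_of_ne hne with h | h
    · exact absurd hfe (ne_of_lt (hmono ⟨hq.le, h.le⟩ hmem h))
    · exact absurd hfe (ne_of_lt (hanti Set.self_mem_Ici h.le h))
  · intro a ha b hb hab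
    simp only [hkey]
    exact mul_lt_mul_of_pos_left
      (hmono ⟨ha.1.le, ha.2.le⟩ ⟨hb.1.le, hb.2.le⟩ hab) hC
  · intro a ha b hb hab
    simp only [hkey]
    exact mul_lt_mul_of_pos_left
      (hanti (Set.mem_Ici.mpr (le_of_lt ha)) (Set.mem_Ici.mpr (le_of_lt hb)) hab) hC
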